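/- Let K be a field, M a finitely generated graded free left R-module of graded rank p (a Laurent polynomial in v), and 0 = M₀ ⊆ M₁ ⊆ ⋯ ⊆ M_r = M a filtration by graded submodules. Suppose for each i there is a graded free left R-submodule N_i ⊆ M_i/M_{i−1} of graded rank q^{(i)} with Σ_i q^{(i)} = p. Then N_i = M_i/M_{i−1} for all i. -/

import Mathlib

open Module Submodule

/-- A module with a `ℤ`-grading (by `K`-submodules) is graded free of graded rank
`p = Σ_j c(j) vʲ` if it has a finite basis over `R` consisting of homogeneous elements,
with exactly `c(j)` basis elements of degree `-j` (a basis element of degree `-j` spans a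
copy of `R(j)`). -/
def IsGradedFreeOfRank (K R₀ : Type) [Field K] {M₀ : Type} [CommRing R₀] [AddCommGroup M₀]
    [Module R₀ M₀] [Module K M₀] (g : ℤ → Submodule K M₀) (c : ℤ →₀ ℕ) : Prop :=
  ∃ (ι : Type) (_ : Fintype ι) (bb : Basis ι R₀ M₀) (d : ι → ℤ),
    (∀ i : ι, (bb i : M₀) ∈ g (d i)) ∧
      ∀ j : ℤ, c j = Nat.card {i : ι // d i = -j}


namespace S15

/-- Unique decomposition property for a family of submodules. -/
def UniqueDecomp {K W : Type} [Field K] [AddCommGroup W] [Module K W]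
    (g : ℤ → Submodule K W) : Prop :=
  ∀ (s : Finset ℤ) (x : ℤ → W), (∀ j, x j ∈ g j) → (∑ j ∈ s, x j) = 0 → ∀ j ∈ s, x j = 0

variable {K W : Type} [Field K] [AddCommGroup W] [Module K W]

theorem UniqueDecomp.of_iSupIndep {g : ℤ → Submodule K W} (h : iSupIndep g) :
    UniqueDecomp g := by
  intro s x hx hs j hj
  have h1 : x j ∈ g j ⊓ ⨆ k ≠ j, g k := by
    refine ⟨hx j, ?_⟩
    have : x j = -∑ k ∈ s.erase j, x k := by
      rw [← Finset.add_sum_erase s x hj] at hs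
      linear_combination (norm := abel) hs
    rw [this]
    refine neg_mem (Submodule.sum_mem _ fun k hk => ?_)
    exact Submodule.mem_iSup_of_mem k (Submodule.mem_iSup_of_mem (Finset.ne_of_mem_erase hk) (hx k))
  rw [(h j).eq_bot] at h1
  simpa using h1

end S15
namespace S15

variable {K W : Type} [Field K] [AddCommGroup W] [Module K W]

theorem grading_eq_span_fiber {g : ℤ → Submodule K W} (hu : UniqueDecomp g)
    {T : Type} (vv : Basis T K W) (δ : T → ℤ) (hmem : ∀ t, vv t ∈ g (δ t)) (j : ℤ) :
    g j = Submodule.span K (vv '' {t | δ t = j}) := by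
  classical
  refine le_antisymm ?_ ?_
  · intro x hx
    set a := vv.repr x with ha
    set y : ℤ → W := fun k => ∑ t ∈ a.support.filter (fun t => δ t = k), a t • vv t with hy
    have hyg : ∀ k, y k ∈ g k := by
      intro k
      refine Submodule.sum_mem _ fun t ht => ?_
      rcases Finset.mem_filter.1 ht with ⟨-, ht2⟩
      exact ht2 ▸ Submodule.smul_mem _ _ (hmem t)
    have hyx : ∑ k ∈ a.support.image δ, y k = x := by
      rw [hy]
      rw [Finset.sum_fiberwise_of_maps_to (fun t ht => Finset.mem_image_of_mem δ ht)]
      conv_rhs => rw [← vv.linearCombination_repr x]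
      rw [Finsupp.linearCombination_apply, Finsupp.sum]
    set s : Finset ℤ := insert j (a.support.image δ) with hs
    have hsum : ∑ k ∈ s, y k = x := by
      rw [hs, Finset.sum_insert_of_eq_zero_if_notMem, hyx]
      intro hj
      show ∑ t ∈ a.support.filter (fun t => δ t = j), a t • vv t = 0
      rw [Finset.filter_false_of_mem, Finset.sum_empty]
      intro t ht hdt
      exact hj (hdt ▸ Finset.mem_image_of_mem δ ht)
    set x' : ℤ → W := fun k => y k - (if k = j then x else 0) with hx'
    have h0 : x' j = 0 := by
      refine hu s x' (fun k => ?_) ?_ j (Finset.mem_insert_self _ _)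
      · by_cases hk : k = j
        · subst hk; simpa [hx'] using Submodule.sub_mem _ (hyg k) hx
        · simpa [hx', hk] using hyg k
      · rw [hx']
        have hjs : j ∈ s := Finset.mem_insert_self _ _
        rw [Finset.sum_sub_distrib, hsum, Finset.sum_ite_eq' s j (fun _ => x)]
        simp [hjs]
    have : x = y j := by
      have := h0
      simp only [hx', if_pos rfl, sub_eq_zero] at this
      exact this.symm
    rw [this, hy]
    refine Submodule.sum_mem _ fun t ht => ?_
    rcases Finset.mem_filter.1 ht with ⟨-, ht2⟩
    exact Submodule.smul_mem _ _ (Submodule.subset_span ⟨t, ht2, rfl⟩)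
  · rw [Submodule.span_le]
    rintro _ ⟨t, ht, rfl⟩
    exact ht ▸ hmem t

theorem finrank_grading {g : ℤ → Submodule K W} (hu : UniqueDecomp g)
    {T : Type} (vv : Basis T K W) (δ : T → ℤ) (hmem : ∀ t, vv t ∈ g (δ t)) (j : ℤ)
    (hfin : Finite {t // δ t = j}) :
    FiniteDimensional K (g j) ∧ Module.finrank K (g j) = Nat.card {t // δ t = j} := by
  classical
  haveI : Fintype {t // δ t = j} := Fintype.ofFinite _
  have hset : {t | δ t = j} = Set.range (Subtype.val : {t // δ t = j} → T) := by
    ext t; simp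
  have him : vv '' {t | δ t = j} = Set.range (fun t : {t // δ t = j} => vv t) := by
    rw [hset, ← Set.range_comp]; rfl
  have heq := grading_eq_span_fiber hu vv δ hmem j
  rw [him] at heq
  have hli : LinearIndependent K (fun t : {t // δ t = j} => vv t) :=
    vv.linearIndependent.comp Subtype.val Subtype.val_injective
  constructor
  · rw [heq]
    exact FiniteDimensional.span_of_finite K (Set.finite_range _)
  · rw [heq, finrank_span_eq_card hli, Nat.card_eq_fintype_card]

end S15
namespace S15

/-- The dimension of the degree-`e` part of `R = K[x₁,…,xₙ]` with variables in degree 2. -/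
noncomputable def Dim (n : ℕ) (e : ℤ) : ℕ :=
  Nat.card {m : Fin n →₀ ℕ // 2 * (m.degree : ℤ) = e}

theorem finite_dimFiber (n : ℕ) (e : ℤ) :
    Finite {m : Fin n →₀ ℕ // 2 * (m.degree : ℤ) = e} := by
  refine Finite.of_injective
    (fun m => (fun i => (⟨(m : Fin n →₀ ℕ) i, ?_⟩ : Fin (e.toNat + 1)))) ?_
  · have h1 : (m : Fin n →₀ ℕ) i ≤ (m : Fin n →₀ ℕ).degree := Finsupp.le_degree i _
    have h2 := m.2
    omega
  · intro m m' h
    exact Subtype.ext (Finsupp.ext fun i => congrArg Fin.val (congrFun h i))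

variable {K : Type} [Field K] {n : ℕ}

theorem finrank_of_isGradedFree {W : Type} [AddCommGroup W]
    [Module (MvPolynomial (Fin n) K) W] [Module K W]
    [IsScalarTower K (MvPolynomial (Fin n) K) W]
    {g : ℤ → Submodule K W} (hu : UniqueDecomp g)
    (hcompat : ∀ (d : ℕ) (f : MvPolynomial (Fin n) K), f.IsHomogeneous d →
      ∀ (j : ℤ), ∀ m ∈ g j, f • m ∈ g (j + 2 * d))
    {c : ℤ →₀ ℕ} (hfree : IsGradedFreeOfRank K (MvPolynomial (Fin n) K) g c) (j : ℤ) :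
    FiniteDimensional K (g j) ∧
      Module.finrank K (g j) = c.sum fun k ck => ck * Dim n (j + k) := by
  classical
  obtain ⟨ι, hι, bb, d, hbmem, hc⟩ := hfree
  let vv := (MvPolynomial.basisMonomials (Fin n) K).smulTower bb
  let δ : (Fin n →₀ ℕ) × ι → ℤ := fun t => d t.2 + 2 * (t.1.degree : ℤ)
  have hmem : ∀ t, vv t ∈ g (δ t) := by
    rintro ⟨m, i⟩
    have hv : vv (m, i) = (MvPolynomial.monomial m 1 : MvPolynomial (Fin n) K) • bb i := by
      rw [Basis.smulTower_apply, MvPolynomial.coe_basisMonomials]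
    rw [hv]
    exact hcompat m.degree _ (MvPolynomial.isHomogeneous_monomial 1 rfl) _ _ (hbmem i)
  -- fibers are finite
  haveI hfib : ∀ i : ι, Finite {m : Fin n →₀ ℕ // δ (m, i) = j} := by
    intro i
    have : Finite {m : Fin n →₀ ℕ // 2 * (m.degree : ℤ) = j - d i} := finite_dimFiber n _
    exact Finite.of_equiv _ (Equiv.subtypeEquivRight (fun m =>
      (by simp only [δ]; omega : 2 * ((m : Fin n →₀ ℕ).degree : ℤ) = j - d i ↔ δ (m, i) = j)))
  let e : {t : (Fin n →₀ ℕ) × ι // δ t = j} ≃ Σ i : ι, {m : Fin n →₀ ℕ // δ (m, i) = j} :=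
    { toFun := fun t => ⟨t.1.2, ⟨t.1.1, t.2⟩⟩
      invFun := fun s => ⟨(s.2.1, s.1), s.2.2⟩
      left_inv := fun ⟨⟨m, i⟩, ht⟩ => rfl
      right_inv := fun ⟨i, m, hm⟩ => rfl }
  haveI hfinT : Finite {t // δ t = j} := Finite.of_equiv _ e.symm
  obtain ⟨hfd, hrk⟩ := finrank_grading hu vv δ hmem j hfinT
  refine ⟨hfd, ?_⟩
  haveI : ∀ i : ι, Fintype {m : Fin n →₀ ℕ // δ (m, i) = j} := fun i => Fintype.ofFinite _
  have h1 : Nat.card {t // δ t = j} = ∑ i : ι, Nat.card {m : Fin n →₀ ℕ // δ (m, i) = j} := by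
    rw [Nat.card_congr e, Nat.card_eq_fintype_card, Fintype.card_sigma]
    exact Finset.sum_congr rfl fun i _ => (Nat.card_eq_fintype_card).symm
  have h2 : ∀ i : ι, Nat.card {m : Fin n →₀ ℕ // δ (m, i) = j} = Dim n (j + (-(d i))) := by
    intro i
    exact Nat.card_congr (Equiv.subtypeEquivRight fun m => by simp only [δ]; omega)
  have h3 : ∑ i : ι, Dim n (j + (-(d i)))
      = ∑ k ∈ Finset.univ.image (fun i : ι => -(d i)),
          (Finset.univ.filter (fun i : ι => -(d i) = k)).card * Dim n (j + k) := by
    rw [← Finset.sum_fiberwise_of_maps_to'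
      (fun i _ => Finset.mem_image_of_mem (fun i : ι => -(d i)) (Finset.mem_univ i))
      (fun k => Dim n (j + k))]
    exact Finset.sum_congr rfl fun k _ => by rw [Finset.sum_const, smul_eq_mul]
  have hcard : ∀ k : ℤ, (Finset.univ.filter (fun i : ι => -(d i) = k)).card = c k := by
    intro k
    have hfe : (Finset.univ.filter (fun i : ι => -(d i) = k))
        = (Finset.univ.filter (fun i : ι => d i = -k)) := by
      ext i; simp only [Finset.mem_filter, Finset.mem_univ, true_and]; omega
    rw [hfe, hc k, Nat.card_eq_fintype_card, Fintype.card_subtype]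
  have hsupp : Finset.univ.image (fun i : ι => -(d i)) = c.support := by
    ext k
    simp only [Finset.mem_image, Finset.mem_univ, true_and, Finsupp.mem_support_iff]
    rw [hc k, Nat.card_eq_fintype_card]
    constructor
    · rintro ⟨i, rfl⟩
      exact (Fintype.card_pos_iff.mpr ⟨⟨i, by omega⟩⟩).ne'
    · intro hk
      obtain ⟨i, hi⟩ := Fintype.card_pos_iff.mp (Nat.pos_of_ne_zero hk)
      exact ⟨i, by omega⟩
  calc Module.finrank K ↥(g j) = Nat.card {t // δ t = j} := hrk
    _ = ∑ i : ι, Nat.card {m : Fin n →₀ ℕ // δ (m, i) = j} := h1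
    _ = ∑ i : ι, Dim n (j + (-(d i))) := Finset.sum_congr rfl fun i _ => h2 i
    _ = ∑ k ∈ Finset.univ.image (fun i : ι => -(d i)),
          (Finset.univ.filter (fun i : ι => -(d i) = k)).card * Dim n (j + k) := h3
    _ = ∑ k ∈ c.support, c k * Dim n (j + k) := by
        rw [hsupp]
        exact Finset.sum_congr rfl fun k _ => by rw [hcard k]
    _ = c.sum fun k ck => ck * Dim n (j + k) := rfl

end S15
namespace S15

variable {K : Type} [Field K]

theorem UniqueDecomp.quotient {R M : Type} [CommRing R] [Algebra K R] [AddCommGroup M]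
    [Module R M] [Module K M] [IsScalarTower K R M]
    {g : ℤ → Submodule K M} (hu : UniqueDecomp g) (A : Submodule R M)
    (hA : A.restrictScalars K = ⨆ j : ℤ, A.restrictScalars K ⊓ g j) :
    UniqueDecomp (fun j => (g j).map (A.mkQ.restrictScalars K)) := by
  classical
  intro s y hy hs j hj
  choose x hxg hxq using fun k => Submodule.mem_map.mp (hy k)
  set z : M := ∑ k ∈ s, x k with hz
  have hzA : z ∈ A.restrictScalars K := by
    have : A.mkQ z = 0 := by
      rw [hz, map_sum]
      rw [show (fun k => A.mkQ (x k)) = fun k => y k from funext fun k => hxq k] at *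
      · exact hs
    simpa [Submodule.Quotient.mk_eq_zero] using this
  rw [hA] at hzA
  obtain ⟨w, hw⟩ := (Submodule.mem_iSup_iff_exists_dfinsupp' _ z).mp hzA
  set t : Finset ℤ := s ∪ w.support with ht
  set u : ℤ → M := fun k => (if k ∈ s then x k else 0) - ((w k : M)) with hu'
  have hug : ∀ k, u k ∈ g k := by
    intro k
    have hwk : (w k : M) ∈ g k := ((w k).2 : _ ∈ A.restrictScalars K ⊓ g k).2
    by_cases hk : k ∈ s
    · simpa [hu', hk] using Submodule.sub_mem _ (hxg k) hwk
    · simpa [hu', hk] using Submodule.neg_mem _ hwk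
  have husum : ∑ k ∈ t, u k = 0 := by
    rw [hu', Finset.sum_sub_distrib]
    have h1 : ∑ k ∈ t, (if k ∈ s then x k else 0) = z := by
      rw [Finset.sum_ite_mem, Finset.inter_eq_right.mpr Finset.subset_union_left]
    have h2 : ∑ k ∈ t, (w k : M) = z := by
      rw [← hw]
      exact (Finset.sum_subset Finset.subset_union_right
        (fun k _ hk => by simp [DFinsupp.notMem_support_iff.mp hk])).symm
    rw [h1, h2, sub_self]
  have h0 := hu t u hug husum j (Finset.mem_union_left _ hj)
  have hxw : x j = (w j : M) := by
    have := h0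
    simp only [hu', if_pos hj, sub_eq_zero] at this
    exact this
  have hyj : y j = A.mkQ (x j) := (hxq j).symm
  rw [hyj, hxw]
  have : (w j : M) ∈ A := ((w j).2 : _ ∈ A.restrictScalars K ⊓ g j).1
  simpa [Submodule.Quotient.mk_eq_zero] using this

end S15
namespace S15

variable {K : Type} [Field K]

theorem UniqueDecomp.comap {W W' : Type} [AddCommGroup W] [Module K W]
    [AddCommGroup W'] [Module K W'] {g : ℤ → Submodule K W} (hu : UniqueDecomp g)
    (f : W' →ₗ[K] W) (hf : Function.Injective f) :
    UniqueDecomp fun j => (g j).comap f := by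
  intro s x hx hsum j hj
  have h := hu s (fun k => f (x k)) (fun k => hx k)
    (by rw [← map_sum, hsum, map_zero]) j hj
  exact hf (by simpa using h)

end S15

set_option maxHeartbeats 1000000 in
theorem statement15' (K : Type) [Field K] (n : ℕ)
    (M : Type) [AddCommGroup M] [Module (MvPolynomial (Fin n) K) M]
    [Module K M] [IsScalarTower K (MvPolynomial (Fin n) K) M]
    (g : ℤ → Submodule K M)
    (hinternal : DirectSum.IsInternal g)
    (hcompat : ∀ (d : ℕ) (f : MvPolynomial (Fin n) K), f.IsHomogeneous d →
      ∀ (j : ℤ), ∀ m ∈ g j, f • m ∈ g (j + 2 * d))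
    (p : ℤ →₀ ℕ) (hM : IsGradedFreeOfRank K (MvPolynomial (Fin n) K) g p)
    (r : ℕ) (F : ℕ → Submodule (MvPolynomial (Fin n) K) M)
    (hFmono : ∀ i, F i ≤ F (i + 1)) (hF0 : F 0 = ⊥) (hFr : F r = ⊤)
    (hFgraded : ∀ i, (F i).restrictScalars K =
      ⨆ j : ℤ, (F i).restrictScalars K ⊓ g j)
    (P : ℕ → Submodule (MvPolynomial (Fin n) K) M)
    (hP : ∀ i < r, F i ≤ P i ∧ P i ≤ F (i + 1))
    (q : ℕ → (ℤ →₀ ℕ))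
    (hN : ∀ i < r, IsGradedFreeOfRank K (MvPolynomial (Fin n) K)
      ((fun j : ℤ => Submodule.comap
          (LinearMap.restrictScalars K (Submodule.subtype ((P i).map (F i).mkQ)))
          (Submodule.map (LinearMap.restrictScalars K (F i).mkQ) (g j))) :
        ℤ → Submodule K ↥((P i).map (F i).mkQ))
      (q i))
    (hsum : (∑ i ∈ Finset.range r, q i) = p) :
    ∀ i < r, (P i).map (F i).mkQ = (F (i + 1)).map (F i).mkQ := by
  classical
  have hu : S15.UniqueDecomp g :=
    S15.UniqueDecomp.of_iSupIndep hinternal.submodule_iSupIndep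
  haveI hfinGj : ∀ j, FiniteDimensional K (g j) :=
    fun j => (S15.finrank_of_isGradedFree hu hcompat hM j).1
  have hrkGj : ∀ j, Module.finrank K ↥(g j) = p.sum fun k ck => ck * S15.Dim n (j + k) :=
    fun j => (S15.finrank_of_isGradedFree hu hcompat hM j).2
  -- rank–nullity for each graded piece of each quotient map
  have hrn : ∀ (i : ℕ) (j : ℤ),
      Module.finrank K ↥(Submodule.map (LinearMap.restrictScalars K (F i).mkQ)
          ((F (i+1)).restrictScalars K ⊓ g j))
        + Module.finrank K ↥((F i).restrictScalars K ⊓ g j)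
        = Module.finrank K ↥((F (i+1)).restrictScalars K ⊓ g j) := by
    intro i j
    haveI : FiniteDimensional K ((F (i+1)).restrictScalars K ⊓ g j : Submodule K M) :=
      Submodule.finiteDimensional_of_le inf_le_right
    have h := LinearMap.finrank_range_add_finrank_ker
      ((LinearMap.restrictScalars K (F i).mkQ).domRestrict
        ((F (i+1)).restrictScalars K ⊓ g j))
    rw [LinearMap.range_domRestrict, LinearMap.ker_domRestrict] at h
    have hker : LinearMap.ker (LinearMap.restrictScalars K (F i).mkQ)
        = (F i).restrictScalars K := by
      rw [LinearMap.ker_restrictScalars, Submodule.ker_mkQ]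
    rw [hker] at h
    have hcomap : Module.finrank K
        (Submodule.comap ((F (i+1)).restrictScalars K ⊓ g j).subtype
          ((F i).restrictScalars K))
        = Module.finrank K ↥((F i).restrictScalars K ⊓ g j) := by
      have hsets : ((F (i+1)).restrictScalars K ⊓ g j) ⊓ (F i).restrictScalars K
          = (F i).restrictScalars K ⊓ g j := by
        ext x
        simp only [Submodule.mem_inf, Submodule.restrictScalars_mem]
        exact ⟨fun h' => ⟨h'.2, h'.1.2⟩, fun h' => ⟨⟨hFmono i h'.1, h'.2⟩, h'.1⟩⟩
      rw [(Submodule.equivMapOfInjective _ (Submodule.injective_subtype _) _).finrank_eq,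
        Submodule.map_comap_subtype, hsets]
    rw [hcomap] at h
    exact h
  -- telescoping
  have htel : ∀ j : ℤ,
      (∑ i ∈ Finset.range r, Module.finrank K
        (Submodule.map (LinearMap.restrictScalars K (F i).mkQ)
          ((F (i+1)).restrictScalars K ⊓ g j)))
      = Module.finrank K ↥(g j) := by
    intro j
    have hstep : ∀ m : ℕ,
        (∑ i ∈ Finset.range m, Module.finrank K
          (Submodule.map (LinearMap.restrictScalars K (F i).mkQ)
            ((F (i+1)).restrictScalars K ⊓ g j)))
          + Module.finrank K ↥((F 0).restrictScalars K ⊓ g j)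
        = Module.finrank K ↥((F m).restrictScalars K ⊓ g j) := by
      intro m
      induction m with
      | zero => simp
      | succ m ih =>
          rw [Finset.sum_range_succ]
          have := hrn m j
          omega
    have h0 : Module.finrank K ↥((F 0).restrictScalars K ⊓ g j) = 0 := by
      rw [hF0, Submodule.restrictScalars_bot, bot_inf_eq, finrank_bot]
    have hr' : Module.finrank K ↥((F r).restrictScalars K ⊓ g j)
        = Module.finrank K ↥(g j) := by
      rw [hFr, Submodule.restrictScalars_top, top_inf_eq]
    have := hstep r
    omega
  -- the graded pieces of the submodules `N i`
  have hNp : ∀ i, i < r → ∀ j : ℤ,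
      FiniteDimensional K (Submodule.comap
          (LinearMap.restrictScalars K (Submodule.subtype ((P i).map (F i).mkQ)))
          (Submodule.map (LinearMap.restrictScalars K (F i).mkQ) (g j)))
      ∧ Module.finrank K ↥(Submodule.comap
          (LinearMap.restrictScalars K (Submodule.subtype ((P i).map (F i).mkQ)))
          (Submodule.map (LinearMap.restrictScalars K (F i).mkQ) (g j)))
        = (q i).sum fun k ck => ck * S15.Dim n (j + k) := by
    intro i hi
    have huq : S15.UniqueDecomp
        (fun j => (g j).map ((F i).mkQ.restrictScalars K)) :=
      hu.quotient (F i) (hFgraded i)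
    have huN : S15.UniqueDecomp (fun j => Submodule.comap
        (LinearMap.restrictScalars K (Submodule.subtype ((P i).map (F i).mkQ)))
        (Submodule.map (LinearMap.restrictScalars K (F i).mkQ) (g j))) :=
      huq.comap _ (Submodule.injective_subtype _)
    have hcompatN : ∀ (d : ℕ) (f : MvPolynomial (Fin n) K), f.IsHomogeneous d →
        ∀ (j : ℤ), ∀ m ∈ (fun j => Submodule.comap
          (LinearMap.restrictScalars K (Submodule.subtype ((P i).map (F i).mkQ)))
          (Submodule.map (LinearMap.restrictScalars K (F i).mkQ) (g j))) j,
          f • m ∈ (fun j => Submodule.comap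
          (LinearMap.restrictScalars K (Submodule.subtype ((P i).map (F i).mkQ)))
          (Submodule.map (LinearMap.restrictScalars K (F i).mkQ) (g j))) (j + 2 * d) := by
      intro d f hf j m hm
      simp only [Submodule.mem_comap, LinearMap.coe_restrictScalars,
        Submodule.coe_subtype] at hm ⊢
      obtain ⟨x, hxg, hxq⟩ := hm
      refine ⟨f • x, hcompat d f hf j x hxg, ?_⟩
      have hcoe : ((f • m : ↥((P i).map (F i).mkQ)) : M ⧸ F i) = f • (m : M ⧸ F i) :=
        Submodule.coe_smul f m
      rw [hcoe, ← hxq]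
      exact map_smul (F i).mkQ f x
    exact fun j => S15.finrank_of_isGradedFree huN hcompatN (hN i hi) j
  -- image of the graded piece of `N i` inside the quotient
  have hImage : ∀ i : ℕ, ∀ j : ℤ,
      Submodule.map (LinearMap.restrictScalars K (Submodule.subtype ((P i).map (F i).mkQ)))
        (Submodule.comap
          (LinearMap.restrictScalars K (Submodule.subtype ((P i).map (F i).mkQ)))
          (Submodule.map (LinearMap.restrictScalars K (F i).mkQ) (g j)))
      = ((P i).map (F i).mkQ).restrictScalars K
          ⊓ Submodule.map (LinearMap.restrictScalars K (F i).mkQ) (g j) := by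
    intro i j
    ext x
    simp only [Submodule.mem_map, Submodule.mem_comap, Submodule.mem_inf,
      Submodule.restrictScalars_mem]
    constructor
    · rintro ⟨m, hm, rfl⟩
      exact ⟨m.2, hm⟩
    · rintro ⟨hxN, hxG⟩
      exact ⟨⟨x, hxN⟩, hxG, rfl⟩
  -- the image of each graded piece of `N i` is contained in the corresponding
  -- graded piece of `F (i+1) / F i`
  have hle : ∀ i, i < r → ∀ j : ℤ,
      ((P i).map (F i).mkQ).restrictScalars K
        ⊓ Submodule.map (LinearMap.restrictScalars K (F i).mkQ) (g j)
      ≤ Submodule.map (LinearMap.restrictScalars K (F i).mkQ)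
          ((F (i+1)).restrictScalars K ⊓ g j) := by
    rintro i hi j x ⟨hxN, hxG⟩
    obtain ⟨y, hyg, hyq⟩ := hxG
    have hxF : x ∈ (F (i+1)).map (F i).mkQ :=
      (Submodule.map_mono (hP i hi).2) hxN
    obtain ⟨z, hz, hzq⟩ := hxF
    have hyz : y - z ∈ F i := by
      have h' : (F i).mkQ (y - z) = 0 := by
        have hyq' : (F i).mkQ y = x := hyq
        rw [map_sub, hyq', hzq, sub_self]
      rwa [← LinearMap.mem_ker, Submodule.ker_mkQ] at h'
    have hyF : y ∈ F (i+1) := by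
      have hy' : y = z + (y - z) := by abel
      rw [hy']
      exact Submodule.add_mem _ hz (hFmono i hyz)
    exact ⟨y, ⟨hyF, hyg⟩, hyq⟩
  -- the graded ranks of the `N i` sum to the graded rank of `M`
  have hq : ∀ j : ℤ,
      (∑ i ∈ Finset.range r, (q i).sum fun k ck => ck * S15.Dim n (j + k))
      = Module.finrank K ↥(g j) := by
    intro j
    rw [hrkGj j, ← hsum]
    have h := map_sum (Finsupp.liftAddHom (α := ℤ) (M := ℕ) (N := ℕ)
      (fun k => AddMonoidHom.mulRight (S15.Dim n (j + k)))) q (Finset.range r)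
    simp only [Finsupp.liftAddHom_apply, AddMonoidHom.coe_mulRight] at h
    exact h.symm
  -- identification of the graded pieces of `N i` with their images
  have hNpeq : ∀ i : ℕ, ∀ j : ℤ,
      Module.finrank K ↥(Submodule.comap
          (LinearMap.restrictScalars K (Submodule.subtype ((P i).map (F i).mkQ)))
          (Submodule.map (LinearMap.restrictScalars K (F i).mkQ) (g j)))
      = Module.finrank K ↥(((P i).map (F i).mkQ).restrictScalars K
          ⊓ Submodule.map (LinearMap.restrictScalars K (F i).mkQ) (g j)) := by
    intro i j
    rw [← hImage i j]
    exact (Submodule.equivMapOfInjective _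
      (fun a b hab => Subtype.val_injective hab) _).finrank_eq
  haveI hfinCp : ∀ i : ℕ, ∀ j : ℤ, FiniteDimensional K
      ↥(Submodule.map (LinearMap.restrictScalars K (F i).mkQ)
        ((F (i+1)).restrictScalars K ⊓ g j)) := by
    intro i j
    haveI : FiniteDimensional K ↥((F (i+1)).restrictScalars K ⊓ g j : Submodule K M) :=
      Submodule.finiteDimensional_of_le inf_le_right
    exact Module.Finite.map _ _
  have hble : ∀ j : ℤ, ∀ i ∈ Finset.range r,
      Module.finrank K ↥(Submodule.comap
          (LinearMap.restrictScalars K (Submodule.subtype ((P i).map (F i).mkQ)))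
          (Submodule.map (LinearMap.restrictScalars K (F i).mkQ) (g j)))
      ≤ Module.finrank K ↥(Submodule.map (LinearMap.restrictScalars K (F i).mkQ)
          ((F (i+1)).restrictScalars K ⊓ g j)) := by
    intro j i hi
    haveI := hfinCp i j
    rw [hNpeq i j]
    exact Submodule.finrank_mono (hle i (Finset.mem_range.mp hi) j)
  have hsums : ∀ j : ℤ,
      (∑ i ∈ Finset.range r, Module.finrank K ↥(Submodule.comap
          (LinearMap.restrictScalars K (Submodule.subtype ((P i).map (F i).mkQ)))
          (Submodule.map (LinearMap.restrictScalars K (F i).mkQ) (g j))))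
      = ∑ i ∈ Finset.range r, Module.finrank K
          ↥(Submodule.map (LinearMap.restrictScalars K (F i).mkQ)
            ((F (i+1)).restrictScalars K ⊓ g j)) := by
    intro j
    calc (∑ i ∈ Finset.range r, Module.finrank K ↥(Submodule.comap
          (LinearMap.restrictScalars K (Submodule.subtype ((P i).map (F i).mkQ)))
          (Submodule.map (LinearMap.restrictScalars K (F i).mkQ) (g j))))
        = ∑ i ∈ Finset.range r, (q i).sum fun k ck => ck * S15.Dim n (j + k) :=
          Finset.sum_congr rfl fun i hi => (hNp i (Finset.mem_range.mp hi) j).2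
      _ = Module.finrank K ↥(g j) := hq j
      _ = _ := (htel j).symm
  have hptwise : ∀ j : ℤ, ∀ i ∈ Finset.range r,
      Module.finrank K ↥(Submodule.comap
          (LinearMap.restrictScalars K (Submodule.subtype ((P i).map (F i).mkQ)))
          (Submodule.map (LinearMap.restrictScalars K (F i).mkQ) (g j)))
      = Module.finrank K ↥(Submodule.map (LinearMap.restrictScalars K (F i).mkQ)
          ((F (i+1)).restrictScalars K ⊓ g j)) :=
    fun j => (Finset.sum_eq_sum_iff_of_le (hble j)).mp (hsums j)
  have hCeq : ∀ i, i < r → ∀ j : ℤ,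
      ((P i).map (F i).mkQ).restrictScalars K
        ⊓ Submodule.map (LinearMap.restrictScalars K (F i).mkQ) (g j)
      = Submodule.map (LinearMap.restrictScalars K (F i).mkQ)
          ((F (i+1)).restrictScalars K ⊓ g j) := by
    intro i hi j
    haveI := hfinCp i j
    refine Submodule.eq_of_le_of_finrank_eq (hle i hi j) ?_
    rw [← hNpeq i j]
    exact hptwise j i (Finset.mem_range.mpr hi)
  -- conclusion
  intro i hi
  refine le_antisymm (Submodule.map_mono (hP i hi).2) ?_
  intro x hx
  obtain ⟨y, hy, rfl⟩ := hx
  have hy' : y ∈ (⨆ j : ℤ, (F (i+1)).restrictScalars K ⊓ g j : Submodule K M) := by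
    rw [← hFgraded (i+1)]
    exact hy
  have hx' : (LinearMap.restrictScalars K (F i).mkQ) y
      ∈ Submodule.map (LinearMap.restrictScalars K (F i).mkQ)
        (⨆ j : ℤ, (F (i+1)).restrictScalars K ⊓ g j) :=
    Submodule.mem_map_of_mem hy'
  rw [Submodule.map_iSup] at hx'
  have hsuple : (⨆ j : ℤ, Submodule.map (LinearMap.restrictScalars K (F i).mkQ)
        ((F (i+1)).restrictScalars K ⊓ g j))
      ≤ ((P i).map (F i).mkQ).restrictScalars K :=
    iSup_le fun j => by rw [← hCeq i hi j]; exact inf_le_left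
  exact hsuple hx'

/-- Let `K` be a field, `R = Sym(V)` (`V` in degree 2), `M` a finitely
generated graded free left `R`-module of graded rank `p`, and `0 = M₀ ⊆ ⋯ ⊆ M_r = M` a
filtration by graded submodules.  If each subquotient `M_i/M_{i-1}` contains a graded free
submodule `N_i` of graded rank `q⁽ⁱ⁾` with `Σ_i q⁽ⁱ⁾ = p`, then `N_i = M_i/M_{i-1}`. -/
theorem statement15 (K : Type) [Field K] (n : ℕ)
    (M : Type) [AddCommGroup M] [Module (MvPolynomial (Fin n) K) M]
    [Module K M] [IsScalarTower K (MvPolynomial (Fin n) K) M]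
    -- the grading of `M`, compatible with the grading of `R = Sym(V)`, `deg V = 2`
    (g : ℤ → Submodule K M)
    (hinternal : DirectSum.IsInternal g)
    (hcompat : ∀ (d : ℕ) (f : MvPolynomial (Fin n) K), f.IsHomogeneous d →
      ∀ (j : ℤ), ∀ m ∈ g j, f • m ∈ g (j + 2 * d))
    -- `M` is graded free of graded rank `p`
    (p : ℤ →₀ ℕ) (hM : IsGradedFreeOfRank K (MvPolynomial (Fin n) K) g p)
    -- the filtration `0 = M₀ ⊆ M₁ ⊆ ⋯ ⊆ M_r = M` by graded submodules
    (r : ℕ) (F : ℕ → Submodule (MvPolynomial (Fin n) K) M)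
    (hFmono : ∀ i, F i ≤ F (i + 1)) (hF0 : F 0 = ⊥) (hFr : F r = ⊤)
    (hFgraded : ∀ i, (F i).restrictScalars K =
      ⨆ j : ℤ, (F i).restrictScalars K ⊓ g j)
    -- the graded free submodules `N_i ⊆ M_i/M_{i-1}`, given as `P i/M_i` for
    -- intermediate submodules `M_i ⊆ P i ⊆ M_{i+1}`
    (P : ℕ → Submodule (MvPolynomial (Fin n) K) M)
    (hP : ∀ i < r, F i ≤ P i ∧ P i ≤ F (i + 1))
    (q : ℕ → (ℤ →₀ ℕ))
    (hN : ∀ i < r, IsGradedFreeOfRank K (MvPolynomial (Fin n) K)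
      ((fun j : ℤ => Submodule.comap
          (LinearMap.restrictScalars K (Submodule.subtype ((P i).map (F i).mkQ)))
          (Submodule.map (LinearMap.restrictScalars K (F i).mkQ) (g j))) :
        ℤ → Submodule K ↥((P i).map (F i).mkQ))
      (q i))
    -- `Σ_i q⁽ⁱ⁾ = p`
    (hsum : (∑ i ∈ Finset.range r, q i) = p) :
    ∀ i < r, (P i).map (F i).mkQ = (F (i + 1)).map (F i).mkQ := by
  exact statement15' K n M g hinternal hcompat p hM r F hFmono hF0 hFr hFgraded P hP q hN hsum
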